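/- arXiv:1608.04338 — 4 statements merged into one kernel-verified Lean document; each statement's English description precedes it below -/
import Mathlib

section
/- Let σ be the K-algebra automorphism of the rational function field RatFunc K determined by σ(X) = ζ·X. Then σ has order n in the group of K-algebra automorphisms of RatFunc K, and the fixed field of the cyclic subgroup generated by σ equals the intermediate field K⟮X^n⟯ generated over K by X^n; in particular the field extension RatFunc K over K⟮X^n⟯ has degree n. -/
set_option maxHeartbeats 1000000
set_option synthInstance.maxHeartbeats 400000

open RatFunc IntermediateField Module Polynomial in
/-- auxiliary facts -/
theorem aux_sigma_pow (K : Type) [Field K] (ζ : K)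
    (σ : RatFunc K ≃ₐ[K] RatFunc K)
    (hσ : σ RatFunc.X = RatFunc.C ζ * RatFunc.X) (k : ℕ) :
    (σ ^ k) RatFunc.X = RatFunc.C (ζ ^ k) * RatFunc.X := by
  induction k with
  | zero => simp
  | succ m ih =>
    have hcm : σ (RatFunc.C (ζ ^ m)) = RatFunc.C (ζ ^ m) := by
      rw [← RatFunc.algebraMap_eq_C]; exact σ.commutes _
    rw [pow_succ', AlgEquiv.mul_apply, ih, map_mul, hcm, hσ, pow_succ' ζ m, map_mul]
    ring

/-- Let `K` be a field, `n` a positive integer and `ζ ∈ K` a primitive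
`n`-th root of unity.  Let `σ` be the `K`-algebra automorphism of `RatFunc K` determined by
`σ(X) = ζ·X`.  Then `σ` has order `n`, the fixed field of the cyclic subgroup generated by
`σ` is `K⟮Xⁿ⟯`, and `[RatFunc K : K⟮Xⁿ⟯] = n`. -/
theorem stmt_0 (K : Type) [Field K] (n : ℕ) (hn : 0 < n) (ζ : K)
    (hζ : IsPrimitiveRoot ζ n)
    (σ : RatFunc K ≃ₐ[K] RatFunc K)
    (hσ : σ RatFunc.X = RatFunc.C ζ * RatFunc.X) :
    orderOf σ = n ∧
    IntermediateField.fixedField (Subgroup.zpowers σ) =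
      IntermediateField.adjoin K {(RatFunc.X : RatFunc K) ^ n} ∧
    Module.finrank (IntermediateField.adjoin K {(RatFunc.X : RatFunc K) ^ n}) (RatFunc K) = n := by
  classical
  -- σ^n = 1
  have hσn : σ ^ n = 1 := by
    have hring : ((σ ^ n : RatFunc K ≃ₐ[K] RatFunc K) : RatFunc K →+* RatFunc K)
        = RingHom.id (RatFunc K) := by
      apply IsLocalization.ringHom_ext (nonZeroDivisors (Polynomial K))
      apply Polynomial.ringHom_ext
      · intro a
        simp only [RingHom.comp_apply, RatFunc.algebraMap_C, RingHom.id_apply]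
        rw [← RatFunc.algebraMap_eq_C]
        exact (σ ^ n).commutes a
      · simp only [RingHom.comp_apply, RatFunc.algebraMap_X, RingHom.id_apply]
        rw [show ((σ ^ n : RatFunc K ≃ₐ[K] RatFunc K) : RatFunc K →+* RatFunc K) RatFunc.X
            = (σ ^ n) RatFunc.X from rfl, aux_sigma_pow K ζ σ hσ n, hζ.pow_eq_one, map_one,
          one_mul]
    ext x
    exact RingHom.congr_fun hring x
  have horder : orderOf σ = n := by
    rw [orderOf_eq_iff hn]
    refine ⟨hσn, fun m hmn hm hEq => ?_⟩
    have := aux_sigma_pow K ζ σ hσ m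
    rw [hEq] at this
    simp only [AlgEquiv.one_apply] at this
    have hC : RatFunc.C (ζ ^ m) = 1 := by
      have hx : (RatFunc.X : RatFunc K) ≠ 0 := RatFunc.X_ne_zero
      have h1 : RatFunc.C (ζ ^ m) * RatFunc.X = 1 * RatFunc.X := by
        rw [one_mul]; exact this.symm
      exact mul_right_cancel₀ hx h1
    have : ζ ^ m = 1 := RatFunc.C.injective (by rw [hC, map_one])
    exact hζ.pow_ne_one_of_pos_of_lt hm.ne' hmn this
  have hfin : IsOfFinOrder σ := by
    rw [← orderOf_pos_iff, horder]; exact hn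
  haveI : Finite (Subgroup.zpowers σ) := hfin.finite_zpowers
  haveI : Fintype (Subgroup.zpowers σ) := Fintype.ofFinite _
  haveI : FaithfulSMul (Subgroup.zpowers σ) (RatFunc K) := by
    refine ⟨fun {g₁ g₂} h => ?_⟩
    exact Subtype.ext (AlgEquiv.ext fun x => h x)
  -- finrank of fixed field
  have hcard : Fintype.card (Subgroup.zpowers σ) = n := by
    rw [← Nat.card_eq_fintype_card, Nat.card_zpowers, horder]
  have hfr : Module.finrank (IntermediateField.fixedField (Subgroup.zpowers σ)) (RatFunc K)
      = n := by
    rw [← hcard]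
    exact FixedPoints.finrank_eq_card (Subgroup.zpowers σ) (RatFunc K)
  -- X^n is fixed
  have hfixX : σ ((RatFunc.X : RatFunc K) ^ n) = RatFunc.X ^ n := by
    rw [map_pow, hσ, mul_pow, ← map_pow, hζ.pow_eq_one, map_one, one_mul]
  have hle : IntermediateField.adjoin K {(RatFunc.X : RatFunc K) ^ n}
      ≤ IntermediateField.fixedField (Subgroup.zpowers σ) := by
    rw [IntermediateField.adjoin_le_iff]
    rintro y hy
    simp only [Set.mem_singleton_iff] at hy
    subst hy
    intro g
    obtain ⟨g, hg⟩ := g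
    obtain ⟨k, rfl⟩ := hg
    show (σ ^ k) ((RatFunc.X : RatFunc K) ^ n) = RatFunc.X ^ n
    have key : ∀ m : ℕ, (σ ^ m) ((RatFunc.X : RatFunc K) ^ n) = RatFunc.X ^ n := by
      intro m
      induction m with
      | zero => simp
      | succ j ih => rw [pow_succ, AlgEquiv.mul_apply, hfixX, ih]
    rcases k with m | m
    · exact key m
    · rw [zpow_negSucc]
      show (σ ^ (m + 1) : RatFunc K ≃ₐ[K] RatFunc K).symm _ = _
      exact (AlgEquiv.symm_apply_eq _).mpr (key (m + 1)).symm
  -- X is integral of degree ≤ n over K⟮Xⁿ⟯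
  set F := IntermediateField.adjoin K {(RatFunc.X : RatFunc K) ^ n} with hF
  have hXnF : (RatFunc.X : RatFunc K) ^ n ∈ F :=
    IntermediateField.mem_adjoin_simple_self K _
  set t : F := ⟨RatFunc.X ^ n, hXnF⟩ with ht
  set P : Polynomial F := Polynomial.X ^ n - Polynomial.C t with hP
  have hPmonic : P.Monic := by
    apply Polynomial.monic_X_pow_sub_C
    exact hn.ne'
  have hPdeg : P.natDegree = n := by
    rw [hP]
    exact Polynomial.natDegree_X_pow_sub_C
  have hPeval : Polynomial.aeval (RatFunc.X : RatFunc K) P = 0 := by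
    rw [hP]
    simp only [map_sub, map_pow, Polynomial.aeval_X, Polynomial.aeval_C]
    have : (algebraMap F (RatFunc K)) t = RatFunc.X ^ n := rfl
    rw [this, sub_self]
  have hint : IsIntegral F (RatFunc.X : RatFunc K) := ⟨P, hPmonic, by
    rw [← Polynomial.aeval_def]; exact hPeval⟩
  -- F⟮X⟯ = ⊤
  have htop : IntermediateField.adjoin F {(RatFunc.X : RatFunc K)} = ⊤ := by
    rw [eq_top_iff]
    rintro z -
    set E := IntermediateField.adjoin F {(RatFunc.X : RatFunc K)} with hE
    have hXE : (RatFunc.X : RatFunc K) ∈ E := IntermediateField.mem_adjoin_simple_self F _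
    have hCmem : ∀ a : K, RatFunc.C a ∈ E := by
      intro a
      have haF : RatFunc.C a ∈ F := by
        rw [← RatFunc.algebraMap_eq_C]
        exact F.algebraMap_mem a
      have : algebraMap F (RatFunc K) ⟨RatFunc.C a, haF⟩ = RatFunc.C a := rfl
      rw [← this]
      exact E.algebraMap_mem _
    have hpoly : ∀ p : Polynomial K, algebraMap (Polynomial K) (RatFunc K) p ∈ E := by
      intro p
      induction p using Polynomial.induction_on with
      | C a => rw [RatFunc.algebraMap_C]; exact hCmem a
      | add p q hp hq => rw [map_add]; exact E.add_mem hp hq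
      | monomial i a _ =>
        rw [map_mul, RatFunc.algebraMap_C, map_pow, RatFunc.algebraMap_X]
        exact mul_mem (hCmem a) (pow_mem hXE (i + 1))
    have hz := RatFunc.num_div_denom z
    rw [← hz]
    exact E.div_mem (hpoly z.num) (hpoly z.denom)
  haveI hfd : FiniteDimensional F (RatFunc K) := by
    have := IntermediateField.adjoin.finiteDimensional hint
    rw [htop] at this
    exact (IntermediateField.topEquiv (F := F) (E := RatFunc K)).toLinearEquiv.finiteDimensional
  have hfr2 : Module.finrank F (RatFunc K) ≤ n := by
    have h1 : Module.finrank F (IntermediateField.adjoin F {(RatFunc.X : RatFunc K)})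
        = (minpoly F (RatFunc.X : RatFunc K)).natDegree := by
      exact IntermediateField.adjoin.finrank hint
    have h2 : (minpoly F (RatFunc.X : RatFunc K)).natDegree ≤ n := by
      rw [← hPdeg]
      exact Polynomial.natDegree_le_natDegree
        (minpoly.degree_le_of_ne_zero F _ hPmonic.ne_zero hPeval)
    have h3 : Module.finrank F (RatFunc K)
        = Module.finrank F (IntermediateField.adjoin F {(RatFunc.X : RatFunc K)}) := by
      rw [htop]
      exact ((IntermediateField.topEquiv (F := F)
        (E := RatFunc K)).toLinearEquiv.finrank_eq).symm
    rw [h3, h1]; exact h2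
  have heq : F = IntermediateField.fixedField (Subgroup.zpowers σ) := by
    apply IntermediateField.eq_of_le_of_finrank_le' hle
    rw [hfr]
    exact hfr2
  refine ⟨horder, heq.symm, ?_⟩
  rw [heq, hfr]
end

section
/- Let τ be the K-algebra automorphism of the rational function field RatFunc K determined by τ(X) = (u·X + s·v)/(v·X + u). Then τ has order n in the group of K-algebra automorphisms of RatFunc K, and the fixed field of the cyclic subgroup generated by τ equals the intermediate field K⟮h⟯ generated over K by h = (X − i)^n/(X + i)^n; this intermediate field also equals K⟮z⟯ where z = i·((X + i)^n − (X − i)^n)/((X + i)^n + (X − i)^n). -/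
open RatFunc IntermediateField

section Aux

variable {K : Type} [Field K]

lemma aux_algebraMap_mem {F : Type*} [Field F] [Algebra K F] [Algebra F (RatFunc K)]
    [IsScalarTower K F (RatFunc K)]
    (S : IntermediateField F (RatFunc K)) (hX : RatFunc.X ∈ S) (p : Polynomial K) :
    algebraMap (Polynomial K) (RatFunc K) p ∈ S := by
  induction p using Polynomial.induction_on' with
  | add p q hp hq => rw [map_add]; exact add_mem hp hq
  | monomial k a =>
      rw [← Polynomial.C_mul_X_pow_eq_monomial, map_mul, map_pow, RatFunc.algebraMap_C,
        RatFunc.algebraMap_X]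
      refine mul_mem ?_ (pow_mem hX _)
      have : RatFunc.C a = algebraMap F (RatFunc K) (algebraMap K F a) := by
        rw [← IsScalarTower.algebraMap_apply]; rfl
      rw [this]
      exact S.algebraMap_mem _

lemma aux_adjoin_X_top {F : Type*} [Field F] [Algebra K F] [Algebra F (RatFunc K)]
    [IsScalarTower K F (RatFunc K)] :
    adjoin F {(RatFunc.X : RatFunc K)} = ⊤ := by
  rw [eq_top_iff]
  intro f _
  have hX : RatFunc.X ∈ adjoin F {(RatFunc.X : RatFunc K)} := subset_adjoin _ _ rfl
  rw [← RatFunc.num_div_denom f]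
  exact div_mem (aux_algebraMap_mem _ hX _) (aux_algebraMap_mem _ hX _)

lemma aux_fix_zpow {L : Type*} [Field L] [Algebra K L]
    (σ : L ≃ₐ[K] L) (f : L) (hf : σ f = f) : ∀ k : ℤ, (σ ^ k) f = f := by
  have hinv : σ⁻¹ f = f := by
    nth_rewrite 1 [← hf]
    exact σ.symm_apply_apply f
  intro k
  induction k using Int.induction_on with
  | zero => rfl
  | succ k ih => rw [zpow_add_one, AlgEquiv.mul_apply, hf, ih]
  | pred k ih => rw [zpow_sub_one, AlgEquiv.mul_apply, hinv, ih]

lemma aux_mem_fixedField {L : Type*} [Field L] [Algebra K L]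
    (H : Subgroup (L ≃ₐ[K] L)) (x : L) :
    x ∈ IntermediateField.fixedField H ↔ ∀ g ∈ H, g x = x := by
  constructor
  · intro h g hg; exact h ⟨g, hg⟩
  · intro h g; exact h g g.2

end Aux

set_option maxHeartbeats 1000000 in
set_option synthInstance.maxHeartbeats 400000 in
/-- Let `K` be a field of characteristic `≠ 2`, `s ∈ K` nonzero, `i² = s`,
`u, v ∈ K` with `u² − s·v² ≠ 0`, and suppose `(u − i·v)/(u + i·v)` is a primitive `n`-th root
of unity.  Let `τ` be the `K`-automorphism of `RatFunc K` with `τ(X) = (uX + sv)/(vX + u)`.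
Then `τ` has order `n`, the fixed field of `⟨τ⟩` is `K⟮h⟯` with
`h = (X − i)ⁿ/(X + i)ⁿ`, and this field also equals `K⟮z⟯` where
`z = i·((X + i)ⁿ − (X − i)ⁿ)/((X + i)ⁿ + (X − i)ⁿ)`. -/
theorem stmt_1 (K : Type) [Field K] (hchar : ringChar K ≠ 2)
    (s : K) (hs : s ≠ 0) (i : K) (hi : i ^ 2 = s)
    (u v : K) (huv : u ^ 2 - s * v ^ 2 ≠ 0)
    (n : ℕ) (hn : 1 ≤ n)
    (hprim : IsPrimitiveRoot ((u - i * v) / (u + i * v)) n)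
    (τ : RatFunc K ≃ₐ[K] RatFunc K)
    (hτ : τ RatFunc.X =
      (RatFunc.C u * RatFunc.X + RatFunc.C (s * v)) / (RatFunc.C v * RatFunc.X + RatFunc.C u)) :
    orderOf τ = n ∧
    IntermediateField.fixedField (Subgroup.zpowers τ) =
      IntermediateField.adjoin K
        {((RatFunc.X - RatFunc.C i) ^ n / (RatFunc.X + RatFunc.C i) ^ n : RatFunc K)} ∧
    IntermediateField.adjoin K
        {((RatFunc.X - RatFunc.C i) ^ n / (RatFunc.X + RatFunc.C i) ^ n : RatFunc K)} =
      IntermediateField.adjoin K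
        {(RatFunc.C i * ((RatFunc.X + RatFunc.C i) ^ n - (RatFunc.X - RatFunc.C i) ^ n) /
          ((RatFunc.X + RatFunc.C i) ^ n + (RatFunc.X - RatFunc.C i) ^ n) : RatFunc K)} := by
  subst hi
  have h2 : (2 : K) ≠ 0 := Ring.two_ne_zero hchar
  have hi0 : i ≠ 0 := by
    intro h; apply hs; rw [h]; ring
  have hprod : (u + i * v) * (u - i * v) = u ^ 2 - i ^ 2 * v ^ 2 := by ring
  have hl1 : u + i * v ≠ 0 := by
    intro h; apply huv; rw [← hprod, h, zero_mul]
  have hl2 : u - i * v ≠ 0 := by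
    intro h; apply huv; rw [← hprod, h, mul_zero]
  have hD : RatFunc.C v * RatFunc.X + RatFunc.C u ≠ 0 := by
    rcases eq_or_ne v 0 with rfl | hv
    · have hu : u ≠ 0 := by intro h; apply huv; rw [h]; ring
      simp only [map_zero, zero_mul, zero_add]
      exact (map_ne_zero (RatFunc.C (K := K))).mpr hu
    · have heq : RatFunc.C v * RatFunc.X + RatFunc.C u =
          algebraMap (Polynomial K) (RatFunc K) (Polynomial.C v * Polynomial.X + Polynomial.C u) := by
        rw [map_add, map_mul, RatFunc.algebraMap_C, RatFunc.algebraMap_C, RatFunc.algebraMap_X]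
      rw [heq]
      apply RatFunc.algebraMap_ne_zero
      intro h0
      apply hv
      have := congrArg (fun p => Polynomial.coeff p 1) h0
      simpa using this
  have hXp : RatFunc.X + RatFunc.C i ≠ 0 := by
    have heq : RatFunc.X + RatFunc.C i =
        algebraMap (Polynomial K) (RatFunc K) (Polynomial.X + Polynomial.C i) := by
      rw [map_add, RatFunc.algebraMap_C, RatFunc.algebraMap_X]
    rw [heq]
    apply RatFunc.algebraMap_ne_zero
    intro h0
    have := congrArg (fun p => Polynomial.coeff p 1) h0
    simpa using this
  have hXm : RatFunc.X - RatFunc.C i ≠ 0 := by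
    have heq : RatFunc.X - RatFunc.C i =
        algebraMap (Polynomial K) (RatFunc K) (Polynomial.X - Polynomial.C i) := by
      rw [map_sub, RatFunc.algebraMap_C, RatFunc.algebraMap_X]
    rw [heq]
    apply RatFunc.algebraMap_ne_zero
    intro h0
    have := congrArg (fun p => Polynomial.coeff p 1) h0
    simpa using this
  set W : RatFunc K := (RatFunc.X - RatFunc.C i) / (RatFunc.X + RatFunc.C i) with hWdef
  have hW0 : W ≠ 0 := div_ne_zero hXm hXp
  set ζ : K := (u - i * v) / (u + i * v) with hζdef
  -- key computation
  have hC : ∀ a : K, τ (RatFunc.C a) = RatFunc.C a := fun a => τ.commutes a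
  have hτp : τ (RatFunc.X + RatFunc.C i) =
      RatFunc.C (u + i * v) * (RatFunc.X + RatFunc.C i) /
        (RatFunc.C v * RatFunc.X + RatFunc.C u) := by
    rw [map_add, hτ, hC]
    rw [eq_div_iff hD, add_mul, div_mul_cancel₀ _ hD]
    simp only [map_add, map_mul, map_pow]
    ring
  have hτm : τ (RatFunc.X - RatFunc.C i) =
      RatFunc.C (u - i * v) * (RatFunc.X - RatFunc.C i) /
        (RatFunc.C v * RatFunc.X + RatFunc.C u) := by
    rw [map_sub, hτ, hC]
    rw [eq_div_iff hD, sub_mul, div_mul_cancel₀ _ hD]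
    simp only [map_add, map_mul, map_pow, map_sub]
    ring
  have hl1' : RatFunc.C (u + i * v) ≠ 0 := (map_ne_zero (RatFunc.C (K := K))).mpr hl1
  have hkey : τ W = RatFunc.C ζ * W := by
    rw [hWdef, hζdef, map_div₀, hτp, hτm, map_div₀ (RatFunc.C (K := K)) (u - i * v) (u + i * v)]
    field_simp
    rw [mul_div_assoc, div_self (by simpa [mul_comm, add_comm] using hD), mul_one]
  have hpow : ∀ m : ℕ, (τ ^ m) W = RatFunc.C (ζ ^ m) * W := by
    intro m
    induction m with
    | zero => simp
    | succ m ih =>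
        rw [pow_succ', AlgEquiv.mul_apply, ih, map_mul, hC, hkey, pow_succ, map_mul]
        ring
  have hζn : ζ ^ n = 1 := hprim.pow_eq_one
  -- τ ^ n = 1
  have hXfix : (τ ^ n) RatFunc.X = RatFunc.X := by
    have h1 : (τ ^ n) W = W := by rw [hpow, hζn, map_one, one_mul]
    set σ := τ ^ n with hσ
    have hσC : ∀ a : K, σ (RatFunc.C a) = RatFunc.C a := fun a => σ.commutes a
    rw [hWdef, map_div₀, map_sub, map_add, hσC] at h1
    have hne : σ RatFunc.X + RatFunc.C i ≠ 0 := by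
      rw [← hσC i, ← map_add, map_ne_zero]
      exact hXp
    rw [div_eq_div_iff hne hXp] at h1
    have h3 : RatFunc.C 2 * RatFunc.C i * σ RatFunc.X = RatFunc.C 2 * RatFunc.C i * RatFunc.X := by
      have h2' : (RatFunc.C 2 : RatFunc K) = 1 + 1 := by
        rw [show (2 : K) = 1 + 1 by norm_num, map_add, map_one]
      rw [h2']
      linear_combination h1
    exact mul_left_cancel₀
      (mul_ne_zero ((map_ne_zero (RatFunc.C (K := K))).mpr h2)
        ((map_ne_zero (RatFunc.C (K := K))).mpr hi0)) h3
  have hτn : τ ^ n = 1 := by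
    have hall : ∀ f : RatFunc K, (τ ^ n) f = f := by
      intro f
      have hXmem : RatFunc.X ∈ IntermediateField.fixedField (Subgroup.zpowers (τ ^ n)) := by
        rw [aux_mem_fixedField]
        intro g hg
        obtain ⟨k, rfl⟩ := Subgroup.mem_zpowers_iff.mp hg
        exact aux_fix_zpow (τ ^ n) RatFunc.X hXfix k
      have hle : adjoin K {(RatFunc.X : RatFunc K)} ≤
          IntermediateField.fixedField (Subgroup.zpowers (τ ^ n)) :=
        adjoin_le_iff.mpr (by simpa using hXmem)
      have hf : f ∈ IntermediateField.fixedField (Subgroup.zpowers (τ ^ n)) := by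
        apply hle
        rw [aux_adjoin_X_top]
        trivial
      exact (aux_mem_fixedField _ _).mp hf _ (Subgroup.mem_zpowers _)
    exact AlgEquiv.ext hall
  have horder : orderOf τ = n := by
    rw [orderOf_eq_iff hn]
    refine ⟨hτn, fun m hmn hm0 h1 => ?_⟩
    have hm := hpow m
    rw [h1] at hm
    have hone : (1 : RatFunc K ≃ₐ[K] RatFunc K) W = W := rfl
    rw [hone] at hm
    have hCζ : RatFunc.C (ζ ^ m) = 1 := by
      have := mul_right_cancel₀ hW0 (by rw [← hm, one_mul] : RatFunc.C (ζ ^ m) * W = 1 * W)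
      exact this
    have hζm : ζ ^ m = 1 := by
      apply RingHom.injective (RatFunc.C (K := K))
      rw [hCζ, map_one]
    exact hprim.pow_ne_one_of_pos_of_lt hm0.ne' hmn hζm
  set A : RatFunc K := (RatFunc.X + RatFunc.C i) ^ n with hAdef
  set B : RatFunc K := (RatFunc.X - RatFunc.C i) ^ n with hBdef
  have hA0 : A ≠ 0 := pow_ne_zero _ hXp
  have hhelW : B / A = W ^ n := by rw [hWdef, div_pow]
  have hfixh : τ (B / A) = B / A := by
    rw [hhelW, map_pow, hkey, mul_pow, ← map_pow, hζn, map_one, one_mul]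
  have hfixall : ∀ g ∈ Subgroup.zpowers τ, g (B / A) = B / A := by
    intro g hg
    obtain ⟨k, rfl⟩ := Subgroup.mem_zpowers_iff.mp hg
    exact aux_fix_zpow τ _ hfixh k
  have hEF : adjoin K {(B / A : RatFunc K)} ≤ IntermediateField.fixedField (Subgroup.zpowers τ) :=
    adjoin_le_iff.mpr (Set.singleton_subset_iff.mpr ((aux_mem_fixedField _ _).mpr hfixall))
  -- A + B ≠ 0
  have hAB0 : A + B ≠ 0 := by
    have hP : ((Polynomial.X + Polynomial.C i) ^ n + (Polynomial.X - Polynomial.C i) ^ n :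
        Polynomial K) ≠ 0 := by
      intro h0
      have hc := congrArg (fun p => Polynomial.coeff p n) h0
      have hm1 : (Polynomial.X + Polynomial.C i).Monic := Polynomial.monic_X_add_C i
      have hm2 : (Polynomial.X - Polynomial.C i).Monic := Polynomial.monic_X_sub_C i
      have hd1 : ((Polynomial.X + Polynomial.C i) ^ n).coeff n = 1 := by
        have := (hm1.pow n).coeff_natDegree
        rwa [Polynomial.natDegree_pow, Polynomial.natDegree_X_add_C, mul_one] at this
      have hd2 : ((Polynomial.X - Polynomial.C i) ^ n).coeff n = 1 := by
        have := (hm2.pow n).coeff_natDegree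
        rwa [Polynomial.natDegree_pow, Polynomial.natDegree_X_sub_C, mul_one] at this
      simp only [Polynomial.coeff_add, hd1, hd2, Polynomial.coeff_zero] at hc
      apply h2
      rw [show (2 : K) = 1 + 1 by norm_num]
      exact hc
    have heqAB : A + B = algebraMap (Polynomial K) (RatFunc K)
        ((Polynomial.X + Polynomial.C i) ^ n + (Polynomial.X - Polynomial.C i) ^ n) := by
      rw [map_add, map_pow, map_pow, map_add, map_sub, RatFunc.algebraMap_C,
        RatFunc.algebraMap_X]
    rw [heqAB]
    exact RatFunc.algebraMap_ne_zero hP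
  have h1h : (1 : RatFunc K) + B / A ≠ 0 := by
    intro h0
    apply hAB0
    field_simp at h0
    linear_combination h0
  have hzf : RatFunc.C i * (A - B) / (A + B) =
      RatFunc.C i * (1 - B / A) / (1 + B / A) := by
    field_simp
  have hCimem : ∀ S : IntermediateField K (RatFunc K), RatFunc.C i ∈ S :=
    fun S => S.algebraMap_mem i
  have hzmem : RatFunc.C i * (A - B) / (A + B) ∈ adjoin K {(B / A : RatFunc K)} := by
    rw [hzf]
    have hmem : B / A ∈ adjoin K {(B / A : RatFunc K)} := subset_adjoin _ _ rfl
    exact div_mem (mul_mem (hCimem _) (sub_mem (one_mem _) hmem)) (add_mem (one_mem _) hmem)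
  have hCiz : RatFunc.C i + RatFunc.C i * (A - B) / (A + B) ≠ 0 := by
    rw [hzf]
    have hrw : RatFunc.C i + RatFunc.C i * (1 - B / A) / (1 + B / A) =
        RatFunc.C 2 * RatFunc.C i / (1 + B / A) := by
      rw [show (2 : K) = 1 + 1 by norm_num, map_add, map_one]
      field_simp
      ring
    rw [hrw]
    exact div_ne_zero
      (mul_ne_zero ((map_ne_zero (RatFunc.C (K := K))).mpr h2)
        ((map_ne_zero (RatFunc.C (K := K))).mpr hi0)) h1h
  have hback : B / A = (RatFunc.C i - RatFunc.C i * (A - B) / (A + B)) /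
      (RatFunc.C i + RatFunc.C i * (A - B) / (A + B)) := by
    rw [eq_div_iff hCiz]
    field_simp
    ring
  have hadj : adjoin K {(B / A : RatFunc K)} =
      adjoin K {(RatFunc.C i * (A - B) / (A + B) : RatFunc K)} := by
    apply le_antisymm
    · apply adjoin_le_iff.mpr
      apply Set.singleton_subset_iff.mpr
      rw [hback]
      have hmem : RatFunc.C i * (A - B) / (A + B) ∈
          adjoin K {(RatFunc.C i * (A - B) / (A + B) : RatFunc K)} := subset_adjoin _ _ rfl
      exact div_mem (sub_mem (hCimem _) hmem) (add_mem (hCimem _) hmem)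
    · exact adjoin_le_iff.mpr (Set.singleton_subset_iff.mpr hzmem)
  -- Artin: the fixed field has finrank n
  have hford : IsOfFinOrder τ := by rw [← orderOf_pos_iff, horder]; omega
  haveI : Finite ↥(Subgroup.zpowers τ) := hford.finite_zpowers.to_subtype
  haveI hfin : Fintype ↥(Subgroup.zpowers τ) := Fintype.ofFinite _
  have hcard : Fintype.card ↥(Subgroup.zpowers τ) = n := by
    rw [← Nat.card_eq_fintype_card, Nat.card_zpowers, horder]
  have hfixrank :
      Module.finrank ↥(IntermediateField.fixedField (Subgroup.zpowers τ)) (RatFunc K) = n := by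
    rw [← hcard]
    exact FixedPoints.finrank_eq_card ↥(Subgroup.zpowers τ) (RatFunc K)
  -- the degree of RatFunc K over the adjoined field is at most n
  have hhelmem : B / A ∈ adjoin K {(B / A : RatFunc K)} := subset_adjoin _ _ rfl
  set E := adjoin K {(B / A : RatFunc K)} with hEdef
  set i' : ↥E := algebraMap K ↥E i with hi'def
  set hq : Polynomial ↥E := Polynomial.C (⟨B / A, hhelmem⟩ : ↥E) *
      (Polynomial.X + Polynomial.C i') ^ n - (Polynomial.X - Polynomial.C i') ^ n with hqdef
  have hmapi : algebraMap ↥E (RatFunc K) i' = RatFunc.C i :=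
    (IsScalarTower.algebraMap_apply K ↥E (RatFunc K) i).symm
  have haev : Polynomial.aeval (RatFunc.X : RatFunc K) hq = 0 := by
    rw [hqdef]
    simp only [map_sub, map_mul, map_pow, map_add, Polynomial.aeval_X, Polynomial.aeval_C]
    rw [hmapi]
    have hcoe : (algebraMap ↥E (RatFunc K)) (⟨B / A, hhelmem⟩ : ↥E) = B / A := rfl
    rw [hcoe, div_mul_cancel₀ B hA0, sub_self]
  have hq0 : hq ≠ 0 := by
    intro h0
    have hc := congrArg (Polynomial.eval (-i')) h0
    simp only [hqdef, Polynomial.eval_sub, Polynomial.eval_mul, Polynomial.eval_pow,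
      Polynomial.eval_add, Polynomial.eval_X, Polynomial.eval_C, Polynomial.eval_zero] at hc
    rw [show (-i' + i' : ↥E) = 0 by ring, zero_pow (by omega), mul_zero, zero_sub,
      neg_eq_zero] at hc
    have hne : (-i' - i' : ↥E) ≠ 0 := by
      have heq2 : (-i' - i' : ↥E) = algebraMap K ↥E (-(i + i)) := by
        rw [map_neg, map_add, hi'def]; ring
      rw [heq2]
      apply (map_ne_zero (algebraMap K ↥E)).mpr
      intro hz
      have hii : i + i = 0 := neg_eq_zero.mp hz
      have h2i : (2 : K) * i = 0 := by rw [two_mul]; exact hii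
      rcases mul_eq_zero.mp h2i with h | h
      · exact h2 h
      · exact hi0 h
    exact hne ((pow_eq_zero_iff (show n ≠ 0 by omega)).mp hc)
  have hiX : IsIntegral ↥E (RatFunc.X : RatFunc K) :=
    isAlgebraic_iff_isIntegral.mp ⟨hq, hq0, haev⟩
  have hd1 : (Polynomial.C (⟨B / A, hhelmem⟩ : ↥E) *
      (Polynomial.X + Polynomial.C i') ^ n).degree ≤ (n : WithBot ℕ) := by
    apply le_trans (Polynomial.degree_mul_le _ _)
    have e1 : ((Polynomial.X + Polynomial.C i') ^ n).degree = (n : WithBot ℕ) := by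
      rw [Polynomial.degree_pow, Polynomial.degree_X_add_C]
      simp
    rw [e1]
    calc Polynomial.degree (Polynomial.C (⟨B / A, hhelmem⟩ : ↥E)) + (n : WithBot ℕ)
        ≤ 0 + (n : WithBot ℕ) := add_le_add_left Polynomial.degree_C_le _
      _ = (n : WithBot ℕ) := zero_add _
  have hd2 : ((Polynomial.X - Polynomial.C i') ^ n).degree ≤ (n : WithBot ℕ) := by
    rw [Polynomial.degree_pow, Polynomial.degree_X_sub_C]
    simp
  have hdeg : (minpoly ↥E (RatFunc.X : RatFunc K)).natDegree ≤ n := by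
    have hmd := minpoly.degree_le_of_ne_zero ↥E (RatFunc.X : RatFunc K) hq0 haev
    have hmd2 : (minpoly ↥E (RatFunc.X : RatFunc K)).degree ≤ (n : WithBot ℕ) := by
      refine le_trans hmd (le_trans ?_ (max_le hd1 hd2))
      rw [hqdef]
      exact Polynomial.degree_sub_le _ _
    exact Polynomial.natDegree_le_iff_degree_le.mpr hmd2
  have htop : adjoin ↥E {(RatFunc.X : RatFunc K)} = ⊤ := aux_adjoin_X_top
  haveI hfd : FiniteDimensional ↥E (RatFunc K) := by
    have hfd' : FiniteDimensional ↥E ↥(adjoin ↥E {(RatFunc.X : RatFunc K)}) :=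
      IntermediateField.adjoin.finiteDimensional hiX
    rw [htop] at hfd'
    exact Module.Finite.equiv (IntermediateField.topEquiv (F := ↥E) (E := RatFunc K)).toLinearEquiv
  have hfinE : Module.finrank ↥E (RatFunc K) ≤ n := by
    have h3 := IntermediateField.adjoin.finrank hiX
    have h4 : Module.finrank ↥E (RatFunc K) =
        Module.finrank ↥E ↥(adjoin ↥E {(RatFunc.X : RatFunc K)}) := by
      rw [htop]
      exact (IntermediateField.topEquiv (F := ↥E) (E := RatFunc K)).toLinearEquiv.finrank_eq.symm
    rw [h4, h3]
    exact hdeg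
  have heqEF : E = IntermediateField.fixedField (Subgroup.zpowers τ) :=
    IntermediateField.eq_of_le_of_finrank_le' hEF (by rw [hfixrank]; exact hfinE)
  exact ⟨horder, heqEF.symm, hadj⟩
end

section
/- Let H be a subgroup of GL(2, F_q) containing all scalar matrices, whose image C in PGL(2, F_q) under the quotient map has order n with gcd(n, p) = 1. (i) If there exists a nonzero vector v ∈ F_q² which is a common eigenvector of all elements of H (i.e., for every g ∈ H there is c ∈ F_q with g·v = c·v), then C is a cyclic group and n divides q − 1. (ii) If no nonzero vector of F_q² is a common eigenvector of all elements of H, but there exists a nonzero vector w ∈ L² which is a common eigenvector of all elements of H regarded as matrices over L, then n divides q + 1. -/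
open Matrix

section Helpers

variable {K : Type*} [Field K]

private lemma eigen_uniq {w : Fin 2 → K} (hw : w ≠ 0) {c c' : K} (h : c • w = c' • w) :
    c = c' := by
  obtain ⟨i, hi⟩ := Function.ne_iff.mp hw
  have h2 := congrFun h i
  simp only [Pi.smul_apply, smul_eq_mul] at h2
  exact mul_right_cancel₀ (by simpa using hi) h2

private lemma GL2_mem_center_iff {g : GL (Fin 2) K} :
    g ∈ Subgroup.center (GL (Fin 2) K) ↔
      ∃ a : K, (g : Matrix (Fin 2) (Fin 2) K) = a • 1 := by
  constructor
  · intro hg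
    have hcom : ∀ t : TransvectionStruct (Fin 2) K,
        Commute t.toMatrix (g : Matrix (Fin 2) (Fin 2) K) := by
      intro t
      have hu := Subgroup.mem_center_iff.mp hg
        ⟨t.toMatrix, t.inv.toMatrix, t.mul_inv, t.inv_mul⟩
      exact congrArg Units.val hu
    obtain ⟨a, ha⟩ := Matrix.mem_range_scalar_of_commute_transvectionStruct hcom
    refine ⟨a, ?_⟩
    rw [← ha, Matrix.scalar_apply, Matrix.smul_one_eq_diagonal]
  · rintro ⟨a, ha⟩
    rw [Subgroup.mem_center_iff]
    intro h
    apply Units.ext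
    show (h : Matrix (Fin 2) (Fin 2) K) * g = g * h
    rw [ha, Matrix.mul_smul, Matrix.smul_mul, mul_one, one_mul]

private lemma sq_scalar_zero {t : K} (h : (t • (1 : Matrix (Fin 2) (Fin 2) K)) * (t • 1) = 0) :
    t = 0 := by
  have h2 := congrFun (congrFun h 0) 0
  simp only [Matrix.smul_mul, Matrix.mul_smul, one_mul, Matrix.smul_apply, Matrix.one_apply_eq,
    Matrix.zero_apply, smul_eq_mul, mul_one] at h2
  exact mul_self_eq_zero.mp h2

private lemma sq_zero (N : Matrix (Fin 2) (Fin 2) K) (htr : N 0 0 + N 1 1 = 0)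
    (hdet : N.det = 0) : N * N = 0 := by
  rw [Matrix.det_fin_two] at hdet
  ext i j
  fin_cases i <;> fin_cases j <;>
    simp only [Matrix.mul_apply, Fin.sum_univ_two, Matrix.zero_apply, Fin.isValue,
      Fin.mk_zero, Fin.mk_one]
  · linear_combination N 0 0 * htr - hdet
  · linear_combination N 0 1 * htr
  · linear_combination N 1 0 * htr
  · linear_combination N 1 1 * htr - hdet

private lemma one_add_pow (M : Matrix (Fin 2) (Fin 2) K) (hM : M * M = 0) :
    ∀ k : ℕ, (1 + M) ^ k = 1 + (k : K) • M
  | 0 => by simp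
  | (k + 1) => by
    rw [pow_succ, one_add_pow M hM k, add_mul, mul_add, mul_add, one_mul, mul_one,
      Matrix.smul_mul, hM, smul_zero, add_zero]
    push_cast
    rw [add_smul, one_smul, one_mul]
    abel

private lemma eq_smul_one_of (A : Matrix (Fin 2) (Fin 2) K) {c : K} (hc : c ≠ 0)
    {w : Fin 2 → K} (hw : w ≠ 0) (hA : A *ᵥ w = c • w) (hdet : A.det = c ^ 2)
    {m : ℕ} (hm : (m : K) ≠ 0) {a : K} (hpow : A ^ m = a • 1) : A = c • 1 := by
  have hker : (A - c • 1).det = 0 := by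
    rw [← Matrix.exists_mulVec_eq_zero_iff]
    exact ⟨w, hw, by
      rw [Matrix.sub_mulVec, hA, Matrix.smul_mulVec, Matrix.one_mulVec, sub_self]⟩
  have hd2 : A 0 0 * A 1 1 - A 0 1 * A 1 0 = c ^ 2 := by rw [← Matrix.det_fin_two]; exact hdet
  have hker2 : (A 0 0 - c) * (A 1 1 - c) - A 0 1 * A 1 0 = 0 := by
    rw [Matrix.det_fin_two] at hker
    simpa using hker
  have htr : A 0 0 + A 1 1 = 2 * c := by
    apply mul_left_cancel₀ hc
    linear_combination hd2 - hker2
  set N := A - c • 1 with hN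
  have hN2 : N * N = 0 := by
    refine sq_zero N ?_ hker
    have e0 : N 0 0 = A 0 0 - c := by simp [hN]
    have e1 : N 1 1 = A 1 1 - c := by simp [hN]
    rw [e0, e1]; linear_combination htr
  set M := c⁻¹ • N with hM
  have hMM : M * M = 0 := by rw [hM, smul_mul_smul_comm, hN2, smul_zero]
  have hAeq : A = c • (1 + M) := by
    rw [hM, smul_add, smul_smul, mul_inv_cancel₀ hc, one_smul, hN]
    rw [Matrix.smul_one_eq_diagonal]
    abel_nf
  have hcm : c ^ m * (m : K) ≠ 0 := mul_ne_zero (pow_ne_zero _ hc) hm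
  have hpow2 : (a : K) • (1 : Matrix (Fin 2) (Fin 2) K) = c ^ m • 1 + (c ^ m * (m : K)) • M := by
    rw [← hpow, hAeq, smul_pow, one_add_pow M hMM, smul_add, smul_smul]
  have h1 : (c ^ m * (m : K)) • M = (a - c ^ m) • (1 : Matrix (Fin 2) (Fin 2) K) := by
    rw [sub_smul, hpow2]; abel
  have hkey : M = ((c ^ m * (m : K))⁻¹ * (a - c ^ m)) • (1 : Matrix (Fin 2) (Fin 2) K) := by
    rw [mul_smul, ← h1, smul_smul, inv_mul_cancel₀ hcm, one_smul]
  rw [hkey] at hMM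
  have ht : (c ^ m * (m : K))⁻¹ * (a - c ^ m) = 0 := sq_scalar_zero hMM
  rw [ht, zero_smul] at hkey
  have hNz : N = 0 := by
    have : c • M = N := by rw [hM, smul_smul, mul_inv_cancel₀ hc, one_smul]
    rw [← this, hkey, smul_zero]
  rw [hN] at hNz
  rw [sub_eq_zero] at hNz
  exact hNz

private lemma eq_smul_one_of_two (A : Matrix (Fin 2) (Fin 2) K) (c : K) (w u : Fin 2 → K)
    (hAw : A *ᵥ w = c • w) (hAu : A *ᵥ u = c • u)
    (hW : (Matrix.of ![![w 0, u 0], ![w 1, u 1]]).det ≠ 0) : A = c • 1 := by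
  set W : Matrix (Fin 2) (Fin 2) K := Matrix.of ![![w 0, u 0], ![w 1, u 1]] with hWdef
  set B := A - c • 1 with hB
  have hBw : B *ᵥ w = 0 := by
    rw [hB, Matrix.sub_mulVec, hAw, Matrix.smul_mulVec, Matrix.one_mulVec, sub_self]
  have hBu : B *ᵥ u = 0 := by
    rw [hB, Matrix.sub_mulVec, hAu, Matrix.smul_mulVec, Matrix.one_mulVec, sub_self]
  have hBW : B * W = 0 := by
    ext i j
    fin_cases j
    · have h2 := congrFun hBw i
      simp only [Matrix.mulVec, dotProduct, Fin.sum_univ_two, Pi.zero_apply] at h2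
      simpa [Matrix.mul_apply, Fin.sum_univ_two, hWdef] using h2
    · have h2 := congrFun hBu i
      simp only [Matrix.mulVec, dotProduct, Fin.sum_univ_two, Pi.zero_apply] at h2
      simpa [Matrix.mul_apply, Fin.sum_univ_two, hWdef] using h2
  have hBz : B = 0 := by
    have hu : W * W⁻¹ = 1 := Matrix.mul_nonsing_inv W (isUnit_iff_ne_zero.mpr hW)
    calc B = B * (W * W⁻¹) := by rw [hu, mul_one]
    _ = (B * W) * W⁻¹ := by rw [Matrix.mul_assoc]
    _ = 0 := by rw [hBW, Matrix.zero_mul]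
  rw [hB, sub_eq_zero] at hBz
  exact hBz

private lemma exists_psi {G A : Type*} [Group G] [Group A] (K : Subgroup G) [K.Normal]
    (H : Subgroup G) (χ : ↥H →* A) (hker : ∀ g : ↥H, (g : G) ∈ K ↔ χ g = 1) :
    ∃ ψ : ↥(H.map (QuotientGroup.mk' K)) →* A, Function.Injective ψ ∧
      ∀ g : ↥H, ψ ((QuotientGroup.mk' K).subgroupMap H g) = χ g := by
  set s := (QuotientGroup.mk' K).subgroupMap H with hs
  have hssurj : Function.Surjective s := MonoidHom.subgroupMap_surjective _ _
  have hkers : ∀ g : ↥H, s g = 1 ↔ (g : G) ∈ K := by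
    intro g
    rw [← Subtype.coe_inj]
    exact QuotientGroup.eq_one_iff _
  have hcond : ∀ g ∈ s.ker, χ g = 1 := fun g hg => (hker g).mp ((hkers g).mp hg)
  set e := QuotientGroup.quotientKerEquivOfSurjective s hssurj with he
  set ψ0 := QuotientGroup.lift s.ker χ (show s.ker ≤ χ.ker from fun g hg => hcond g hg) with hψ0
  have hemk : ∀ g : ↥H, e (QuotientGroup.mk g) = s g := fun g => rfl
  refine ⟨ψ0.comp e.symm.toMonoidHom, ?_, ?_⟩
  · rw [injective_iff_map_eq_one]
    intro x hx
    obtain ⟨g, rfl⟩ := hssurj x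
    have hsymm : e.symm (s g) = QuotientGroup.mk g := by
      rw [← hemk g, MulEquiv.symm_apply_apply]
    rw [MonoidHom.comp_apply] at hx
    rw [MulEquiv.coe_toMonoidHom, hsymm] at hx
    rw [hψ0, QuotientGroup.lift_mk'] at hx
    exact (hkers g).mpr ((hker g).mpr hx)
  · intro g
    have hsymm : e.symm (s g) = QuotientGroup.mk g := by
      rw [← hemk g, MulEquiv.symm_apply_apply]
    rw [MonoidHom.comp_apply, MulEquiv.coe_toMonoidHom, hsymm, hψ0, QuotientGroup.lift_mk']

private lemma map_mulVec' {F L : Type*} [Field F] [Field L] (f : F →+* L)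
    (A : Matrix (Fin 2) (Fin 2) F) (v : Fin 2 → F) :
    A.map f *ᵥ (fun i => f (v i)) = fun i => f ((A *ᵥ v) i) := by
  funext i
  simp [Matrix.mulVec, dotProduct, Fin.sum_univ_two, map_add, _root_.map_mul]

private lemma exists_eigenhom {F K : Type*} [Field F] [Field K] (f : F →+* K)
    (H : Subgroup (GL (Fin 2) F)) (w : Fin 2 → K) (hw : w ≠ 0)
    (hcom : ∀ g ∈ H, ∃ c : K, ((g : Matrix (Fin 2) (Fin 2) F)).map f *ᵥ w = c • w) :
    ∃ cH : ↥H →* Kˣ, ∀ g : ↥H,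
      (((g : GL (Fin 2) F) : Matrix (Fin 2) (Fin 2) F)).map f *ᵥ w = (cH g : K) • w := by
  choose c0 hc0 using fun g : ↥H => hcom g.1 g.2
  have hne : ∀ g : ↥H, c0 g ≠ 0 := by
    intro g hc
    apply hw
    set gK := Units.map f.mapMatrix.toMonoidHom (g : GL (Fin 2) F) with hgK
    have h1 : ((gK⁻¹ : (Matrix (Fin 2) (Fin 2) K)ˣ) : Matrix (Fin 2) (Fin 2) K) *ᵥ
        ((((g : GL (Fin 2) F) : Matrix (Fin 2) (Fin 2) F)).map f *ᵥ w) = w := by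
      rw [Matrix.mulVec_mulVec]
      have h2 : ((gK⁻¹ : (Matrix (Fin 2) (Fin 2) K)ˣ) : Matrix (Fin 2) (Fin 2) K) *
          (((g : GL (Fin 2) F) : Matrix (Fin 2) (Fin 2) F)).map f = 1 := by
        have : (((g : GL (Fin 2) F) : Matrix (Fin 2) (Fin 2) F)).map f = (gK : Matrix (Fin 2) (Fin 2) K) := by
          rw [hgK, Units.coe_map]
          rfl
        rw [this, Units.inv_mul]
      rw [h2, Matrix.one_mulVec]
    rw [hc0 g, hc, zero_smul, Matrix.mulVec_zero] at h1
    exact h1.symm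
  have hmul : ∀ a b : ↥H, c0 (a * b) = c0 a * c0 b := by
    intro a b
    apply eigen_uniq hw
    rw [← hc0 (a * b)]
    have hab : ((((a * b) : ↥H) : GL (Fin 2) F) : Matrix (Fin 2) (Fin 2) F) =
        ((a : GL (Fin 2) F) : Matrix (Fin 2) (Fin 2) F) *
        ((b : GL (Fin 2) F) : Matrix (Fin 2) (Fin 2) F) := rfl
    rw [hab, _root_.Matrix.map_mul, ← Matrix.mulVec_mulVec, hc0 b, Matrix.mulVec_smul, hc0 a,
      smul_smul, mul_comm (c0 b)]
  refine ⟨MonoidHom.mk' (fun g => Units.mk0 (c0 g) (hne g)) ?_, fun g => by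
    rw [hc0 g]; rfl⟩
  intro a b
  ext
  simp [hmul]

private lemma mem_range_of_pow_card {F L : Type*} [Field F] [Fintype F] [Field L] [Algebra F L]
    (x : L) (hx : x ^ (Fintype.card F) = x) : x ∈ Set.range (algebraMap F L) := by
  classical
  set q := Fintype.card F with hq
  have hq1 : 1 < q := Fintype.one_lt_card
  set P : Polynomial L := Polynomial.X ^ q - Polynomial.X with hP
  have hPne : P ≠ 0 := FiniteField.X_pow_card_sub_X_ne_zero L hq1
  have hdeg : P.natDegree = q := FiniteField.X_pow_card_sub_X_natDegree_eq L hq1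
  set S : Finset L := Finset.univ.image (algebraMap F L) with hS
  set T : Finset L := P.roots.toFinset with hT
  have hsub : S ⊆ T := by
    intro y hy
    obtain ⟨a, -, rfl⟩ := Finset.mem_image.mp hy
    rw [hT, Multiset.mem_toFinset, Polynomial.mem_roots hPne]
    simp only [hP, Polynomial.IsRoot, Polynomial.eval_sub, Polynomial.eval_pow,
      Polynomial.eval_X]
    rw [← map_pow, FiniteField.pow_card, sub_self]
  have hcardS : S.card = q := by
    rw [hS, Finset.card_image_of_injective _ (algebraMap F L).injective, Finset.card_univ]
  have hcardT : T.card ≤ q :=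
    le_trans (Multiset.toFinset_card_le _) (le_trans (Polynomial.card_roots' P) (le_of_eq hdeg))
  have hST : S = T := Finset.eq_of_subset_of_card_le hsub (by rw [hcardS]; exact hcardT)
  have hxT : x ∈ T := by
    rw [hT, Multiset.mem_toFinset, Polynomial.mem_roots hPne]
    simp only [hP, Polynomial.IsRoot, Polynomial.eval_sub, Polynomial.eval_pow, Polynomial.eval_X]
    rw [hx, sub_self]
  rw [← hST] at hxT
  obtain ⟨a, -, ha⟩ := Finset.mem_image.mp hxT
  exact ⟨a, ha⟩

private lemma frob_eigen {F L : Type*} [Field F] [Field L] [Algebra F L]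
    (σ : L →+* L) (hσ : ∀ a : F, σ (algebraMap F L a) = algebraMap F L a)
    (A : Matrix (Fin 2) (Fin 2) F) {w : Fin 2 → L} {c : L}
    (hA : A.map (algebraMap F L) *ᵥ w = c • w) :
    A.map (algebraMap F L) *ᵥ (fun i => σ (w i)) = σ c • fun i => σ (w i) := by
  funext i
  have h2 := congrFun hA i
  simp only [Matrix.mulVec, dotProduct, Fin.sum_univ_two, Matrix.map_apply,
    Pi.smul_apply, smul_eq_mul] at h2 ⊢
  calc algebraMap F L (A i 0) * σ (w 0) + algebraMap F L (A i 1) * σ (w 1)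
      = σ (algebraMap F L (A i 0) * w 0 + algebraMap F L (A i 1) * w 1) := by
        rw [map_add, _root_.map_mul, _root_.map_mul, hσ, hσ]
    _ = σ c * σ (w i) := by rw [h2, _root_.map_mul]

end Helpers

/-- Let `q = p^h` with `p` an odd prime, and let `H ≤ GL(2, F_q)` contain
all scalar matrices (equivalently, the center), with image `C` in `PGL(2, F_q)` of order `n`
prime to `p`.  (i) If the elements of `H` have a common eigenvector over `F_q`, then `C` is
cyclic and `n ∣ q − 1`.  (ii) If they have no common eigenvector over `F_q` but have a common
eigenvector over a quadratic extension `L` of `F_q`, then `n ∣ q + 1`. -/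
theorem stmt_2 (p h : ℕ) [Fact p.Prime] (hp2 : p ≠ 2) (hh : 0 < h)
    (F : Type) [Field F] [Fintype F] (hF : Fintype.card F = p ^ h)
    (L : Type) [Field L] [Algebra F L] (hL : Module.finrank F L = 2)
    (H : Subgroup (GL (Fin 2) F)) (hHc : Subgroup.center (GL (Fin 2) F) ≤ H)
    (n : ℕ) (hn : Nat.card (H.map (QuotientGroup.mk' (Subgroup.center (GL (Fin 2) F)))) = n)
    (hnp : Nat.Coprime n p) :
    ((∃ w : Fin 2 → F, w ≠ 0 ∧ ∀ g ∈ H, ∃ c : F,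
        (g : Matrix (Fin 2) (Fin 2) F) *ᵥ w = c • w) →
      IsCyclic (H.map (QuotientGroup.mk' (Subgroup.center (GL (Fin 2) F)))) ∧
        n ∣ p ^ h - 1) ∧
    ((¬ ∃ w : Fin 2 → F, w ≠ 0 ∧ ∀ g ∈ H, ∃ c : F,
        (g : Matrix (Fin 2) (Fin 2) F) *ᵥ w = c • w) →
      (∃ w : Fin 2 → L, w ≠ 0 ∧ ∀ g ∈ H, ∃ c : L,
        ((g : Matrix (Fin 2) (Fin 2) F).map (algebraMap F L)) *ᵥ w = c • w) →
      n ∣ p ^ h + 1) := by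
  classical
  set K := Subgroup.center (GL (Fin 2) F) with hK
  set C := H.map (QuotientGroup.mk' K) with hC
  haveI hcharF : CharP F p := by
    obtain ⟨r, hr⟩ := CharP.exists F
    haveI := hr
    have hrp : r.Prime := CharP.char_is_prime F r
    obtain ⟨k, -, hcard⟩ := FiniteField.card F r
    have hpr : p = r := by
      have h1 : p ∣ r ^ (k : ℕ) := by
        rw [← hcard, hF]
        exact dvd_pow_self p hh.ne'
      exact (Nat.prime_dvd_prime_iff_eq Fact.out hrp).mp
        (Nat.Prime.dvd_of_dvd_pow Fact.out h1)
    rwa [hpr]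
  have hn0 : n ≠ 0 := by
    rw [← hn]
    exact Nat.card_pos.ne'
  have hnF : (n : F) ≠ 0 := by
    intro h0
    rw [CharP.cast_eq_zero_iff F p] at h0
    have h2 : Nat.Coprime p p := Nat.Coprime.coprime_dvd_left h0 hnp
    rw [Nat.Coprime, Nat.gcd_self] at h2
    exact (Fact.out : p.Prime).one_lt.ne' h2
  constructor
  · -- Part (i)
    rintro ⟨w, hw, hcom⟩
    have hcom' : ∀ g ∈ H, ∃ c : F,
        ((g : Matrix (Fin 2) (Fin 2) F)).map (RingHom.id F) *ᵥ w = c • w := by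
      intro g hg
      obtain ⟨c, hc⟩ := hcom g hg
      refine ⟨c, ?_⟩
      have hid : ((g : Matrix (Fin 2) (Fin 2) F)).map ⇑(RingHom.id F)
          = (g : Matrix (Fin 2) (Fin 2) F) := by ext i j; rfl
      rwa [hid]
    obtain ⟨cH, hcH0⟩ := exists_eigenhom (RingHom.id F) H w hw hcom'
    have hcH : ∀ g : ↥H,
        ((g : GL (Fin 2) F) : Matrix (Fin 2) (Fin 2) F) *ᵥ w = (cH g : F) • w := by
      intro g
      have h2 := hcH0 g
      have hid : (((g : GL (Fin 2) F) : Matrix (Fin 2) (Fin 2) F)).map ⇑(RingHom.id F)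
          = ((g : GL (Fin 2) F) : Matrix (Fin 2) (Fin 2) F) := by ext i j; rfl
      rwa [hid] at h2
    set D : ↥H →* Fˣ := (Matrix.GeneralLinearGroup.det).comp H.subtype with hD
    have hDval : ∀ g : ↥H,
        (D g : F) = ((g : GL (Fin 2) F) : Matrix (Fin 2) (Fin 2) F).det := fun g => rfl
    set χ : ↥H →* Fˣ := MonoidHom.mk' (fun g => (cH g) ^ 2 * (D g)⁻¹) (by
      intro a b
      rw [_root_.map_mul, _root_.map_mul, mul_pow, mul_inv, mul_mul_mul_comm]) with hχ
    have hker : ∀ g : ↥H, (g : GL (Fin 2) F) ∈ K ↔ χ g = 1 := by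
      intro g
      constructor
      · intro hg
        obtain ⟨a, ha⟩ := GL2_mem_center_iff.mp hg
        have hdetne : ((g : GL (Fin 2) F) : Matrix (Fin 2) (Fin 2) F).det ≠ 0 := by
          rw [← hDval g]; exact Units.ne_zero _
        have hdeta : ((g : GL (Fin 2) F) : Matrix (Fin 2) (Fin 2) F).det = a ^ 2 := by
          rw [ha, Matrix.det_smul, Matrix.det_one, mul_one, Fintype.card_fin]
        have ha0 : a ≠ 0 := by
          intro h0
          apply hdetne
          rw [hdeta, h0]
          ring
        have heig : ((g : GL (Fin 2) F) : Matrix (Fin 2) (Fin 2) F) *ᵥ w = a • w := by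
          rw [ha, Matrix.smul_mulVec, Matrix.one_mulVec]
        have hca : (cH g : F) = a := eigen_uniq hw ((hcH g).symm.trans heig)
        apply Units.ext
        simp only [hχ, MonoidHom.mk'_apply, Units.val_mul, Units.val_pow_eq_pow_val,
          Units.val_inv_eq_inv_val, Units.val_one, hDval, hca, hdeta]
        exact mul_inv_cancel₀ (pow_ne_zero 2 ha0)
      · intro hg1
        have hdetne : ((g : GL (Fin 2) F) : Matrix (Fin 2) (Fin 2) F).det ≠ 0 := by
          rw [← hDval g]; exact Units.ne_zero _
        have hval : ((g : GL (Fin 2) F) : Matrix (Fin 2) (Fin 2) F).det = (cH g : F) ^ 2 := by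
          have h2 := congrArg Units.val hg1
          simp only [hχ, MonoidHom.mk'_apply, Units.val_mul, Units.val_pow_eq_pow_val,
            Units.val_inv_eq_inv_val, Units.val_one, hDval] at h2
          field_simp [hdetne] at h2
          exact h2.symm
        have hy : ((g : GL (Fin 2) F) ^ n) ∈ K := by
          have hyC : (QuotientGroup.mk' K) (g : GL (Fin 2) F) ∈ C := ⟨g, g.2, rfl⟩
          have h1 : (⟨_, hyC⟩ : ↥C) ^ n = 1 := by rw [← hn]; exact pow_card_eq_one'
          have h2 : ((QuotientGroup.mk' K) (g : GL (Fin 2) F)) ^ n = 1 := by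
            have h3 := congrArg (Subtype.val) h1
            simpa using h3
          rw [← map_pow] at h2
          rwa [QuotientGroup.mk'_apply, QuotientGroup.eq_one_iff] at h2
        obtain ⟨a, ha⟩ := GL2_mem_center_iff.mp hy
        have hpow : ((g : GL (Fin 2) F) : Matrix (Fin 2) (Fin 2) F) ^ n = a • 1 := by
          rw [← Units.val_pow_eq_pow_val]
          exact ha
        have hsc := eq_smul_one_of ((g : GL (Fin 2) F) : Matrix (Fin 2) (Fin 2) F)
          (Units.ne_zero (cH g)) hw (hcH g) hval hnF hpow
        exact GL2_mem_center_iff.mpr ⟨(cH g : F), hsc⟩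
    obtain ⟨ψ, hψinj, -⟩ := exists_psi K H χ hker
    have hiso := MonoidHom.ofInjective hψinj
    haveI hcyc : IsCyclic ↥C := isCyclic_of_surjective hiso.symm hiso.symm.surjective
    refine ⟨hcyc, ?_⟩
    have h1 : Nat.card ↥C = Nat.card ψ.range := Nat.card_congr hiso.toEquiv
    have h2 : Nat.card ψ.range ∣ Nat.card Fˣ := Subgroup.card_subgroup_dvd_card _
    have h3 : Nat.card Fˣ = p ^ h - 1 := by
      rw [Nat.card_eq_fintype_card, Fintype.card_units, hF]
    rw [← hn, h1, ← h3]
    exact h2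
  · -- Part (ii)
    intro hnoF hex
    obtain ⟨w, hw, hcom⟩ := hex
    haveI : CharP L p := charP_of_injective_algebraMap (algebraMap F L).injective p
    haveI : ExpChar L p := ExpChar.prime Fact.out
    haveI : Module.Finite F L := Module.finite_of_finrank_pos (by rw [hL]; norm_num)
    haveI : Finite L := Module.finite_of_finite F
    haveI : Fintype L := Fintype.ofFinite L
    have hcardL : Fintype.card L = (p ^ h) ^ 2 := by
      rw [Module.card_eq_pow_finrank (K := F) (V := L), hF, hL]
    set σ := iterateFrobenius L p h with hσdef
    have hσx : ∀ x : L, σ x = x ^ (p ^ h) := fun x => iterateFrobenius_def p h x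
    have hσalg : ∀ a : F, σ (algebraMap F L a) = algebraMap F L a := by
      intro a
      rw [hσx, ← map_pow]
      have h2 : a ^ (p ^ h) = a := by rw [← hF]; exact FiniteField.pow_card a
      rw [h2]
    set wσ : Fin 2 → L := fun i => σ (w i) with hwσ
    by_cases hdW : (Matrix.of ![![w 0, wσ 0], ![w 1, wσ 1]]).det = 0
    · exfalso
      apply hnoF
      have hrel : w 0 * (w 1) ^ (p ^ h) = (w 0) ^ (p ^ h) * w 1 := by
        rw [Matrix.det_fin_two_of] at hdW
        simp only [hwσ, hσx] at hdW
        linear_combination hdW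
      have hwcases : w 0 ≠ 0 ∨ w 1 ≠ 0 := by
        by_contra hcon
        push_neg at hcon
        apply hw
        funext i
        fin_cases i
        · exact hcon.1
        · exact hcon.2
      rcases hwcases with h0 | h1
      · set t := w 1 * (w 0)⁻¹ with ht
        have htfix : t ^ Fintype.card F = t := by
          rw [hF]
          apply mul_left_cancel₀ (pow_ne_zero (p ^ h) h0)
          rw [← mul_pow]
          have hw0t : w 0 * t = w 1 := by rw [ht]; field_simp
          rw [hw0t, ht]
          field_simp
          linear_combination hrel
        obtain ⟨s, hs⟩ := mem_range_of_pow_card t htfix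
        refine ⟨![1, s], ?_, ?_⟩
        · intro h0v
          have h2 := congrFun h0v 0
          simp at h2
        · intro g hg
          obtain ⟨c, hc⟩ := hcom g hg
          set u : Fin 2 → L := fun i => algebraMap F L (![1, s] i) with hu
          have hwu : w = (w 0) • u := by
            funext i
            fin_cases i
            · simp [hu]
            · show w 1 = w 0 • u 1
              rw [hu]
              show w 1 = w 0 • algebraMap F L s
              rw [hs, smul_eq_mul, ht]
              field_simp
          have hueig : ((g : Matrix (Fin 2) (Fin 2) F)).map (algebraMap F L) *ᵥ u = c • u := by
            have h2 : ((g : Matrix (Fin 2) (Fin 2) F)).map (algebraMap F L) *ᵥ ((w 0) • u)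
                = c • ((w 0) • u) := by rw [← hwu]; exact hc
            rw [Matrix.mulVec_smul] at h2
            have h4 := h2.trans (smul_comm c (w 0) u)
            exact smul_right_injective _ h0 h4
          have hmv := map_mulVec' (algebraMap F L) (g : Matrix (Fin 2) (Fin 2) F) ![1, s]
          rw [← hu] at hmv
          have hfin := hmv.symm.trans hueig
          have hcval : c = algebraMap F L (((g : Matrix (Fin 2) (Fin 2) F) *ᵥ ![1, s]) 0) := by
            have h5 := congrFun hfin 0
            simp only [Pi.smul_apply, smul_eq_mul, hu] at h5
            simpa using h5.symm
          refine ⟨((g : Matrix (Fin 2) (Fin 2) F) *ᵥ ![1, s]) 0, ?_⟩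
          funext i
          apply (algebraMap F L).injective
          have h6 := congrFun hfin i
          simp only [Pi.smul_apply, smul_eq_mul, hu] at h6
          rw [Pi.smul_apply, smul_eq_mul, _root_.map_mul, ← hcval]
          exact h6
      · set t := w 0 * (w 1)⁻¹ with ht
        have htfix : t ^ Fintype.card F = t := by
          rw [hF]
          apply mul_left_cancel₀ (pow_ne_zero (p ^ h) h1)
          rw [← mul_pow]
          have hw1t : w 1 * t = w 0 := by rw [ht]; field_simp
          rw [hw1t, ht]
          field_simp
          linear_combination -hrel
        obtain ⟨s, hs⟩ := mem_range_of_pow_card t htfix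
        refine ⟨![s, 1], ?_, ?_⟩
        · intro h0v
          have h2 := congrFun h0v 1
          simp at h2
        · intro g hg
          obtain ⟨c, hc⟩ := hcom g hg
          set u : Fin 2 → L := fun i => algebraMap F L (![s, 1] i) with hu
          have hwu : w = (w 1) • u := by
            funext i
            fin_cases i
            · show w 0 = w 1 • u 0
              rw [hu]
              show w 0 = w 1 • algebraMap F L s
              rw [hs, smul_eq_mul, ht]
              field_simp
            · simp [hu]
          have hueig : ((g : Matrix (Fin 2) (Fin 2) F)).map (algebraMap F L) *ᵥ u = c • u := by
            have h2 : ((g : Matrix (Fin 2) (Fin 2) F)).map (algebraMap F L) *ᵥ ((w 1) • u)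
                = c • ((w 1) • u) := by rw [← hwu]; exact hc
            rw [Matrix.mulVec_smul] at h2
            have h4 := h2.trans (smul_comm c (w 1) u)
            exact smul_right_injective _ h1 h4
          have hmv := map_mulVec' (algebraMap F L) (g : Matrix (Fin 2) (Fin 2) F) ![s, 1]
          rw [← hu] at hmv
          have hfin := hmv.symm.trans hueig
          have hcval : c = algebraMap F L (((g : Matrix (Fin 2) (Fin 2) F) *ᵥ ![s, 1]) 1) := by
            have h5 := congrFun hfin 1
            simp only [Pi.smul_apply, smul_eq_mul, hu] at h5
            simpa using h5.symm
          refine ⟨((g : Matrix (Fin 2) (Fin 2) F) *ᵥ ![s, 1]) 1, ?_⟩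
          funext i
          apply (algebraMap F L).injective
          have h6 := congrFun hfin i
          simp only [Pi.smul_apply, smul_eq_mul, hu] at h6
          rw [Pi.smul_apply, smul_eq_mul, _root_.map_mul, ← hcval]
          exact h6
    · obtain ⟨cH, hcH⟩ := exists_eigenhom (algebraMap F L) H w hw hcom
      set χ : ↥H →* Lˣ := MonoidHom.mk' (fun g => (cH g) ^ (p ^ h) * (cH g)⁻¹) (by
        intro a b
        rw [_root_.map_mul, mul_pow, mul_inv, mul_mul_mul_comm]) with hχ
      have hker : ∀ g : ↥H, (g : GL (Fin 2) F) ∈ K ↔ χ g = 1 := by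
        intro g
        constructor
        · intro hg
          obtain ⟨a, ha⟩ := GL2_mem_center_iff.mp hg
          have hmap : ((g : GL (Fin 2) F) : Matrix (Fin 2) (Fin 2) F).map (algebraMap F L)
              = (algebraMap F L a) • 1 := by
            rw [ha]
            ext i j
            fin_cases i <;> fin_cases j <;>
              simp [Matrix.map_apply, Matrix.one_apply]
          have heig : ((g : GL (Fin 2) F) : Matrix (Fin 2) (Fin 2) F).map (algebraMap F L) *ᵥ w
              = (algebraMap F L a) • w := by
            rw [hmap, Matrix.smul_mulVec, Matrix.one_mulVec]
          have hca : (cH g : L) = algebraMap F L a := eigen_uniq hw ((hcH g).symm.trans heig)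
          apply Units.ext
          simp only [hχ, MonoidHom.mk'_apply, Units.val_mul, Units.val_pow_eq_pow_val,
            Units.val_inv_eq_inv_val, Units.val_one, hca]
          rw [← map_pow]
          have h2 : a ^ (p ^ h) = a := by rw [← hF]; exact FiniteField.pow_card a
          rw [h2]
          exact mul_inv_cancel₀ (by rw [← hca]; exact Units.ne_zero _)
        · intro hg1
          have hcfix : (cH g : L) ^ (p ^ h) = (cH g : L) := by
            have h2 := congrArg Units.val hg1
            simp only [hχ, MonoidHom.mk'_apply, Units.val_mul, Units.val_pow_eq_pow_val,
              Units.val_inv_eq_inv_val, Units.val_one] at h2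
            field_simp [Units.ne_zero (cH g)] at h2
            exact h2
          have hweig := hcH g
          have hwσeig : ((g : GL (Fin 2) F) : Matrix (Fin 2) (Fin 2) F).map (algebraMap F L)
              *ᵥ wσ = (cH g : L) • wσ := by
            have h2 := frob_eigen σ hσalg ((g : GL (Fin 2) F) : Matrix (Fin 2) (Fin 2) F) hweig
            rw [hσx, hcfix] at h2
            rw [hwσ]
            exact h2
          have hsc := eq_smul_one_of_two
            (((g : GL (Fin 2) F) : Matrix (Fin 2) (Fin 2) F).map (algebraMap F L))
            (cH g : L) w wσ hweig hwσeig hdW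
          refine GL2_mem_center_iff.mpr ⟨((g : GL (Fin 2) F) : Matrix (Fin 2) (Fin 2) F) 0 0, ?_⟩
          ext i j
          fin_cases i <;> fin_cases j
          · simp [Matrix.one_apply]
          · apply (algebraMap F L).injective
            have h2 := congrFun (congrFun hsc 0) 1
            simp only [Matrix.map_apply, Matrix.smul_apply, Matrix.one_apply, smul_eq_mul] at h2
            simpa using h2
          · apply (algebraMap F L).injective
            have h2 := congrFun (congrFun hsc 1) 0
            simp only [Matrix.map_apply, Matrix.smul_apply, Matrix.one_apply, smul_eq_mul] at h2
            simpa using h2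
          · show ((g : GL (Fin 2) F) : Matrix (Fin 2) (Fin 2) F) 1 1
              = (((g : GL (Fin 2) F) : Matrix (Fin 2) (Fin 2) F) 0 0
                  • (1 : Matrix (Fin 2) (Fin 2) F)) 1 1
            rw [Matrix.smul_apply, Matrix.one_apply_eq, smul_eq_mul, mul_one]
            apply (algebraMap F L).injective
            have h2 := congrFun (congrFun hsc 1) 1
            have h3 := congrFun (congrFun hsc 0) 0
            simp only [Matrix.map_apply, Matrix.smul_apply, Matrix.one_apply_eq,
              smul_eq_mul, mul_one] at h2 h3
            rw [h2, h3]
      obtain ⟨ψ, hψinj, hψeq⟩ := exists_psi K H χ hker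
      have hcardLx : Fintype.card Lˣ = (p ^ h) ^ 2 - 1 := by
        rw [Fintype.card_units, hcardL]
      have hxpow : ∀ x : ↥C, x ^ (p ^ h + 1) = 1 := by
        intro x
        obtain ⟨g, rfl⟩ := MonoidHom.subgroupMap_surjective (QuotientGroup.mk' K) H x
        apply hψinj
        rw [map_pow, hψeq, _root_.map_one]
        set d := cH g with hd
        have h1 : χ g = d ^ (((p ^ h : ℕ) : ℤ) - 1) := by
          rw [_root_.zpow_sub, zpow_natCast, zpow_one]
          simp [hχ, MonoidHom.mk'_apply, hd]
        have h2 : χ g ^ (p ^ h + 1) = d ^ ((((p ^ h : ℕ) : ℤ) - 1) * ((p ^ h + 1 : ℕ) : ℤ)) := by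
          rw [h1, ← zpow_natCast (d ^ (((p ^ h : ℕ) : ℤ) - 1)) (p ^ h + 1), ← _root_.zpow_mul]
        have h3 : ((((p ^ h : ℕ)) : ℤ) - 1) * ((p ^ h + 1 : ℕ) : ℤ)
            = (((p ^ h) ^ 2 - 1 : ℕ) : ℤ) := by
          have hle : 1 ≤ (p ^ h) ^ 2 :=
            Nat.one_le_pow _ _ (Nat.pow_pos (Fact.out : p.Prime).pos)
          rw [Nat.cast_sub hle]
          push_cast
          ring
        rw [h2, h3, zpow_natCast, ← hcardLx]
        exact pow_card_eq_one
      have hiso := MonoidHom.ofInjective hψinj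
      haveI hcyc : IsCyclic ↥C := isCyclic_of_surjective hiso.symm hiso.symm.surjective
      obtain ⟨x, hxgen⟩ := IsCyclic.exists_generator (α := ↥C)
      have hord : orderOf x = n := by
        rw [← hn]
        exact orderOf_eq_card_of_forall_mem_zpowers hxgen
      rw [← hord]
      exact orderOf_dvd_of_pow_eq_one (hxpow x)
end

section
/- Suppose η is a K-algebra automorphism of F and α, β ∈ K are nonzero elements such that η(x) = α·x and η(y) = β·y⁻¹. Then a = 1, α^n = −1 and β^m = 1. -/
noncomputable section

open MvPolynomial

/-- The bivariate polynomial `a·Xⁿ·Yᵐ + Xⁿ + Yᵐ − 1` over `K` (with `X = X 0`, `Y = X 1`). -/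
abbrev curvePoly (K : Type) [Field K] (n m : ℕ) (a : K) : MvPolynomial (Fin 2) K :=
  C a * X 0 ^ n * X 1 ^ m + X 0 ^ n + X 1 ^ m - 1

/-- The coordinate ring `K[X,Y]/(a·Xⁿ·Yᵐ + Xⁿ + Yᵐ − 1)`. -/
abbrev CurveRing (K : Type) [Field K] (n m : ℕ) (a : K) : Type :=
  MvPolynomial (Fin 2) K ⧸ Ideal.span {curvePoly K n m a}

/-- The images of the coordinates `X`, `Y` in a fraction field `F` of the coordinate ring. -/
def curveGen (K : Type) [Field K] (n m : ℕ) (a : K) (F : Type) [Field F]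
    [Algebra (CurveRing K n m a) F] (j : Fin 2) : F :=
  algebraMap (CurveRing K n m a) F (Ideal.Quotient.mk _ (X j))

lemma coeffAux1 {R : Type*} [CommRing R] {n : ℕ} (hn : 1 ≤ n) (a b : R) :
    (Polynomial.C a * Polynomial.X ^ n + Polynomial.C b).coeff n = a := by
  simp only [Polynomial.coeff_add, Polynomial.coeff_C_mul, Polynomial.coeff_X_pow,
    Polynomial.coeff_C, if_pos rfl, if_neg (by omega : ¬ n = 0)]
  simp

lemma coeffAux0 {R : Type*} [CommRing R] {n : ℕ} (hn : 1 ≤ n) (a b : R) :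
    (Polynomial.C a * Polynomial.X ^ n + Polynomial.C b).coeff 0 = b := by
  simp only [Polynomial.coeff_add, Polynomial.coeff_C_mul, Polynomial.coeff_X_pow,
    Polynomial.coeff_C, if_pos rfl, if_neg (by omega : ¬ 0 = n)]
  simp

lemma ndAux {R : Type*} [CommRing R] {n : ℕ} (a b : R) :
    (Polynomial.C a * Polynomial.X ^ n + Polynomial.C b).natDegree ≤ n := by
  apply le_trans (Polynomial.natDegree_add_le _ _)
  simp
  apply le_trans (Polynomial.natDegree_mul_le)
  simpa using Polynomial.natDegree_X_pow_le (R := R) n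

lemma eqAux {R : Type*} [CommRing R] [IsDomain R] {n : ℕ} (hn : 1 ≤ n) {q : Polynomial R}
    {a₁ b₁ a₂ b₂ : R} (ha₁ : a₁ ≠ 0) (ha₂ : a₂ ≠ 0)
    (h : Polynomial.C a₂ * Polynomial.X ^ n + Polynomial.C b₂
       = q * (Polynomial.C a₁ * Polynomial.X ^ n + Polynomial.C b₁)) :
    ∃ c : R, q = Polynomial.C c := by
  have hD : (Polynomial.C a₁ * Polynomial.X ^ n + Polynomial.C b₁) ≠ 0 := fun h0 => ha₁ (by
    have := coeffAux1 hn a₁ b₁; rw [h0] at this; simpa using this.symm)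
  have hG : (Polynomial.C a₂ * Polynomial.X ^ n + Polynomial.C b₂) ≠ 0 := fun h0 => ha₂ (by
    have := coeffAux1 hn a₂ b₂; rw [h0] at this; simpa using this.symm)
  have hq : q ≠ 0 := by rintro rfl; simp at h; exact hG h
  have hdD : (Polynomial.C a₁ * Polynomial.X ^ n + Polynomial.C b₁).natDegree = n :=
    le_antisymm (ndAux _ _) (Polynomial.le_natDegree_of_ne_zero (by rw [coeffAux1 hn]; exact ha₁))
  have hdG : (Polynomial.C a₂ * Polynomial.X ^ n + Polynomial.C b₂).natDegree = n :=
    le_antisymm (ndAux _ _) (Polynomial.le_natDegree_of_ne_zero (by rw [coeffAux1 hn]; exact ha₂))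
  have := congrArg Polynomial.natDegree h
  rw [hdG, Polynomial.natDegree_mul hq hD, hdD] at this
  have : q.natDegree = 0 := by omega
  exact Polynomial.natDegree_eq_zero.mp this |>.imp fun c hc => hc.symm

lemma coeffAux {R : Type*} [CommRing R] {n : ℕ} (hn : 1 ≤ n) {c a₁ b₁ a₂ b₂ : R}
    (h : Polynomial.C a₂ * Polynomial.X ^ n + Polynomial.C b₂
       = Polynomial.C c * (Polynomial.C a₁ * Polynomial.X ^ n + Polynomial.C b₁)) :
    a₂ = c * a₁ ∧ b₂ = c * b₁ := by
  constructor
  · have := congrArg (fun p => Polynomial.coeff p n) h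
    simpa [coeffAux1 hn] using this
  · have := congrArg (fun p => Polynomial.coeff p 0) h
    simpa [coeffAux0 hn] using this

/-- With `F` the function field of `a·Xⁿ·Yᵐ + Xⁿ + Yᵐ = 1` over a field `K`
of characteristic `≠ 2`, if `η` is a `K`-automorphism of `F` with `η(x) = α·x` and
`η(y) = β·y⁻¹` for nonzero `α, β ∈ K`, then `a = 1`, `αⁿ = −1` and `βᵐ = 1`. -/
theorem stmt_5 (K : Type) [Field K] (hchar : ringChar K ≠ 2)
    (n m : ℕ) (hn : 1 ≤ n) (hm : 1 ≤ m) (a : K) (ha : a ≠ 0)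
    (hprime : (Ideal.span {curvePoly K n m a}).IsPrime)
    (F : Type) [Field F] [Algebra K F] [Algebra (CurveRing K n m a) F]
    [IsScalarTower K (CurveRing K n m a) F] [IsFractionRing (CurveRing K n m a) F]
    (η : F ≃ₐ[K] F) (α β : K) (hα : α ≠ 0) (hβ : β ≠ 0)
    (hηx : η (curveGen K n m a F 0) = algebraMap K F α * curveGen K n m a F 0)
    (hηy : η (curveGen K n m a F 1) = algebraMap K F β * (curveGen K n m a F 1)⁻¹) :
    a = 1 ∧ α ^ n = -1 ∧ β ^ m = 1 := by
  haveI := hprime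
  set f := curvePoly K n m a with hf
  -- the evaluation homs to K[X][Y]
  set φ : MvPolynomial (Fin 2) K →ₐ[K] Polynomial (Polynomial K) :=
    MvPolynomial.aeval ![Polynomial.C Polynomial.X, Polynomial.X] with hφ
  set φ' : MvPolynomial (Fin 2) K →ₐ[K] Polynomial (Polynomial K) :=
    MvPolynomial.aeval ![Polynomial.X, Polynomial.C Polynomial.X] with hφ'
  -- the map to the function field
  set ψ : MvPolynomial (Fin 2) K →+* F :=
    (algebraMap (CurveRing K n m a) F).comp (Ideal.Quotient.mk (Ideal.span {f})) with hψ
  have hker : ∀ p : MvPolynomial (Fin 2) K, ψ p = 0 ↔ f ∣ p := by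
    intro p
    rw [hψ, RingHom.comp_apply,
      map_eq_zero_iff _ (IsFractionRing.injective (CurveRing K n m a) F),
      Ideal.Quotient.eq_zero_iff_mem, Ideal.mem_span_singleton]
  have hψC : ∀ c : K, ψ (MvPolynomial.C c) = algebraMap K F c := by
    intro c
    rw [hψ, RingHom.comp_apply, IsScalarTower.algebraMap_apply K (CurveRing K n m a) F]
    congr 1
  set A : K →+* F := algebraMap K F with hA
  set x : F := curveGen K n m a F 0 with hx
  set y : F := curveGen K n m a F 1 with hy
  have hψx : ψ (X 0) = x := rfl
  have hψy : ψ (X 1) = y := rfl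
  -- the curve relation in F
  have hrel : A a * x ^ n * y ^ m + x ^ n + y ^ m - 1 = 0 := by
    have h0 : ψ f = 0 := (hker f).mpr dvd_rfl
    rw [hf] at h0
    simpa [map_add, map_sub, map_mul, map_pow, map_one, hψC, hψx, hψy] using h0
  -- y ≠ 0
  have hfφ' : φ' f = Polynomial.C (Polynomial.C a * Polynomial.X ^ m + Polynomial.C 1)
      * Polynomial.X ^ n + Polynomial.C (Polynomial.C 1 * Polynomial.X ^ m + Polynomial.C (-1)) := by
    rw [hf]
    simp [hφ', MvPolynomial.aeval_X, Polynomial.C_pow, Polynomial.C_mul, Polynomial.C_add,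
      Polynomial.C_neg, algebraMap_eq]
    ring
  have hfφ : φ f = Polynomial.C (Polynomial.C a * Polynomial.X ^ n + Polynomial.C 1)
      * Polynomial.X ^ m + Polynomial.C (Polynomial.C 1 * Polynomial.X ^ n + Polynomial.C (-1)) := by
    rw [hf]
    simp [hφ, MvPolynomial.aeval_X, Polynomial.C_pow, Polynomial.C_mul, Polynomial.C_add,
      Polynomial.C_neg, algebraMap_eq]
    ring
  have hcoeffne : ∀ (c : K), c ≠ 0 → ∀ (k : ℕ), 1 ≤ k → ∀ b : K, (Polynomial.C c * Polynomial.X ^ k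
      + Polynomial.C b : Polynomial K) ≠ 0 := by
    intro c hc k hk b h0
    have := coeffAux1 hk c b
    rw [h0] at this
    exact hc (by simpa using this.symm)
  -- generic "f does not divide things of small degree in one variable" via φ or φ'
  have hnotdvd : ∀ (χ : MvPolynomial (Fin 2) K →ₐ[K] Polynomial (Polynomial K)) (k : ℕ),
      1 ≤ k → ∀ (p r : Polynomial K), p ≠ 0 →
      χ f = Polynomial.C p * Polynomial.X ^ k + Polynomial.C r →
      ∀ w : MvPolynomial (Fin 2) K, χ w ≠ 0 → (χ w).natDegree = 0 → ¬ f ∣ w := by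
    intro χ k hk p r hp hχf w hw0 hwdeg hdvd
    have hdvd2 : χ f ∣ χ w := map_dvd χ hdvd
    have h1 : (χ f).natDegree ≤ (χ w).natDegree := Polynomial.natDegree_le_of_dvd hdvd2 hw0
    have h2 : k ≤ (χ f).natDegree := by
      rw [hχf]
      exact Polynomial.le_natDegree_of_ne_zero (by rw [coeffAux1 hk]; exact hp)
    omega
  -- y ≠ 0
  have hy0 : y ≠ 0 := by
    intro h0
    have : f ∣ X 1 := (hker (X 1)).mp (by rw [hψy, h0])
    refine hnotdvd φ' n hn _ _ (hcoeffne a ha m hm 1) hfφ' (X 1) ?_ ?_ this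
    · simp [hφ', MvPolynomial.aeval_X]
    · simp [hφ', MvPolynomial.aeval_X]
  -- the transformed relation
  set g : MvPolynomial (Fin 2) K :=
    C (α ^ n) * X 0 ^ n * X 1 ^ m + C (a * α ^ n * β ^ m) * X 0 ^ n - X 1 ^ m + C (β ^ m)
    with hg
  have hψg : ψ g = 0 := by
    have hrel2 := congrArg η hrel
    rw [map_zero] at hrel2
    rw [map_sub, map_add, map_add, map_mul, map_mul, map_pow, map_pow, map_one,
      AlgEquiv.commutes, hηx, hηy] at hrel2
    rw [hg]
    simp only [map_add, map_sub, map_mul, map_pow, hψC, hψx, hψy]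
    have hA' : ∀ c : K, algebraMap K F c = A c := fun _ => rfl
    rw [hA', hA', hA'] at hrel2 ⊢
    field_simp at hrel2
    have hyy : y ^ m * y⁻¹ ^ m = 1 := by rw [← mul_pow, mul_inv_cancel₀ hy0, one_pow]
    linear_combination y ^ m * hrel2 - (A α ^ n * x ^ n * A a * A β ^ m + A β ^ m) * hyy
  have hdvdg : f ∣ g := (hker g).mp hψg
  -- push through φ
  have hgφ : φ g = Polynomial.C (Polynomial.C (α ^ n) * Polynomial.X ^ n + Polynomial.C (-1))
      * Polynomial.X ^ m
      + Polynomial.C (Polynomial.C (a * α ^ n * β ^ m) * Polynomial.X ^ n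
        + Polynomial.C (β ^ m)) := by
    rw [hg]
    simp [hφ, MvPolynomial.aeval_X, Polynomial.C_pow, Polynomial.C_mul, Polynomial.C_add,
      Polynomial.C_neg, algebraMap_eq]
    ring
  obtain ⟨Q, hQ⟩ := map_dvd φ hdvdg
  rw [hfφ, hgφ] at hQ
  replace hQ := hQ.trans (mul_comm _ _)
  have hαn : (α : K) ^ n ≠ 0 := pow_ne_zero _ hα
  obtain ⟨qc, rfl⟩ := eqAux hm (hcoeffne a ha n hn 1) (hcoeffne _ hαn n hn (-1)) hQ
  obtain ⟨hp₂, hr₂⟩ := coeffAux hm hQ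
  -- second stage
  obtain ⟨c, rfl⟩ := eqAux hn ha hαn hp₂
  obtain ⟨e1, e2⟩ := coeffAux hn hp₂
  obtain ⟨e3, e4⟩ := coeffAux hn hr₂
  -- e1 : α^n = c * a, e2 : -1 = c * 1, e3 : a*α^n*β^m = c*1, e4 : β^m = c*(-1)
  have hc : c = -1 := by linear_combination -e2
  have hβm : β ^ m = 1 := by rw [e4, hc]; ring
  have hαna : α ^ n = -a := by rw [e1, hc]; ring
  have ha2 : a ^ 2 = 1 := by
    have h5 := e3
    rw [hαna, hβm, hc] at h5
    linear_combination -h5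
  have hcase : a = 1 ∨ a = -1 := by
    have h0 : (a - 1) * (a + 1) = 0 := by linear_combination ha2
    rcases mul_eq_zero.mp h0 with h | h
    · left; linear_combination h
    · right; linear_combination h
  rcases hcase with h1 | hneg
  · exact ⟨h1, by rw [hαna, h1], hβm⟩
  · exfalso
    have hmem : ((X 0 ^ n - 1) * (X 1 ^ m - 1) : MvPolynomial (Fin 2) K)
        ∈ Ideal.span {f} := by
      have hfe : ((X 0 ^ n - 1) * (X 1 ^ m - 1) : MvPolynomial (Fin 2) K) = -f := by
        rw [hf, hneg]
        simp only [curvePoly, map_neg, map_one]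
        ring
      rw [hfe]
      exact neg_mem (Ideal.subset_span rfl)
    rcases hprime.mem_or_mem hmem with hmm | hmm
    · have hd : f ∣ X 0 ^ n - 1 := Ideal.mem_span_singleton.mp hmm
      have heq : φ ((X 0 : MvPolynomial (Fin 2) K) ^ n - 1)
          = Polynomial.C (Polynomial.X ^ n - Polynomial.C 1) := by
        simp [hφ, map_sub, map_pow, map_one, Polynomial.C_pow, Polynomial.C_sub]
      refine hnotdvd φ m hm _ _ (hcoeffne a ha n hn 1) hfφ _ ?_ ?_ hd
      · rw [heq, Polynomial.C_ne_zero]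
        exact Polynomial.X_pow_sub_C_ne_zero (by omega : 0 < n) 1
      · rw [heq]; exact Polynomial.natDegree_C _
    · have hd : f ∣ X 1 ^ m - 1 := Ideal.mem_span_singleton.mp hmm
      have heq : φ' ((X 1 : MvPolynomial (Fin 2) K) ^ m - 1)
          = Polynomial.C (Polynomial.X ^ m - Polynomial.C 1) := by
        simp [hφ', map_sub, map_pow, map_one, Polynomial.C_pow, Polynomial.C_sub]
      refine hnotdvd φ' n hn _ _ (hcoeffne a ha m hm 1) hfφ' _ ?_ ?_ hd
      · rw [heq, Polynomial.C_ne_zero]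
        exact Polynomial.X_pow_sub_C_ne_zero (by omega : 0 < m) 1
      · rw [heq]; exact Polynomial.natDegree_C _
end
end
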